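/- If w ∈ S_n is a dominant permutation (i.e., 132-avoiding), then the Schubert polynomial of w equals the monomial ∏_{(i,j) ∈ D(w)} x_i = ∏_{i=1}^n x_i^{c_i(w)}, where D(w) is the Rothe diagram and c_i(w) is the code of w. -/

import Mathlib

open Finset MvPolynomial

/-- The number of inversions (the length) of a permutation. -/
def invCount {n : ℕ} (w : Equiv.Perm (Fin n)) : ℕ :=
  (Finset.univ.filter fun p : Fin n × Fin n => p.1 < p.2 ∧ w p.2 < w p.1).card

/-- The longest permutation `w_0`. -/
def w0 (n : ℕ) : Equiv.Perm (Fin n) := Fin.revPerm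

open Classical in
/-- The divided difference operator `∂` with respect to variables `x_i`, `x_j`:
`∂(f) = (f - s·f)/(x_i - x_j)` where `s·f` swaps the variables `x_i` and `x_j`.
(It is `0` in the impossible case that the division cannot be carried out.) -/
noncomputable def ddiff {n : ℕ} (i j : Fin n) (f : MvPolynomial (Fin n) ℤ) :
    MvPolynomial (Fin n) ℤ :=
  if h : ∃ g, f - MvPolynomial.rename (Equiv.swap i j) f = (X i - X j) * g then h.choose
  else 0

/-- `IsSchubert w f` asserts that `f` is the Schubert polynomial of `w`, via the
recursive definition: the Schubert polynomial of `w_0` is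
`x_1^{n-1} x_2^{n-2} ⋯ x_{n-1}` (0-indexed: `∏ x_i^{n-1-i}`), and
`S_w = ∂_i (S_{w s_i})` whenever `ℓ(w s_i) = ℓ(w) + 1`. -/
inductive IsSchubert {n : ℕ} : Equiv.Perm (Fin n) → MvPolynomial (Fin n) ℤ → Prop
  | base : IsSchubert (w0 n) (∏ i : Fin n, X i ^ (n - 1 - i.val))
  | step (w : Equiv.Perm (Fin n)) (i : Fin n) (hi : i.val + 1 < n)
      (f : MvPolynomial (Fin n) ℤ) :
      IsSchubert (w * Equiv.swap i ⟨i.val + 1, hi⟩) f →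
      invCount (w * Equiv.swap i ⟨i.val + 1, hi⟩) = invCount w + 1 →
      IsSchubert w (ddiff i ⟨i.val + 1, hi⟩ f)

/-- The Rothe diagram of a permutation `w`. -/
def rothe (n : ℕ) (w : Equiv.Perm (Fin n)) : Finset (Fin n × Fin n) :=
  Finset.univ.filter fun p => p.2 < w p.1 ∧ p.1 < w⁻¹ p.2

/-- The code of a permutation. -/
def code {n : ℕ} (w : Equiv.Perm (Fin n)) (i : Fin n) : ℕ :=
  (Finset.univ.filter fun j : Fin n => (i, j) ∈ rothe n w).card

section Lemmas

variable {n : ℕ}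

lemma code_eq (w : Equiv.Perm (Fin n)) (i : Fin n) :
    code w i = (univ.filter fun m : Fin n => i < m ∧ w m < w i).card := by
  unfold code
  refine Finset.card_equiv (w⁻¹ : Equiv.Perm (Fin n)) fun j => ?_
  simp only [rothe, mem_filter, mem_univ, true_and, Equiv.Perm.inv_def, Equiv.apply_symm_apply]
  tauto

lemma code_le (w : Equiv.Perm (Fin n)) (i : Fin n) : code w i ≤ n - 1 - i.val := by
  rw [code_eq]
  calc (univ.filter fun m : Fin n => i < m ∧ w m < w i).card
      ≤ (Finset.Ioi i).card :=
        Finset.card_le_card fun m hm => mem_Ioi.mpr (mem_filter.mp hm).2.1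
    _ = n - 1 - i.val := Fin.card_Ioi i

lemma code_succ_lt (w : Equiv.Perm (Fin n)) {i j : Fin n} (hij : i < j) (hw : w j < w i) :
    code w j + 1 ≤ code w i := by
  rw [code_eq, code_eq]
  have hsub : insert j (univ.filter fun m : Fin n => j < m ∧ w m < w j)
      ⊆ (univ.filter fun m : Fin n => i < m ∧ w m < w i) := by
    intro m hm
    rcases Finset.mem_insert.mp hm with rfl | hm
    · exact mem_filter.mpr ⟨mem_univ _, hij, hw⟩
    · obtain ⟨-, h1, h2⟩ := mem_filter.mp hm
      exact mem_filter.mpr ⟨mem_univ _, hij.trans h1, h2.trans hw⟩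
  have := Finset.card_le_card hsub
  rwa [Finset.card_insert_of_notMem (by simp)] at this


lemma code_adj (w : Equiv.Perm (Fin n))
    (hdom : ¬ ∃ i j k : Fin n, i < j ∧ j < k ∧ w i < w k ∧ w k < w j)
    (i : ℕ) (h : i + 1 < n) :
    code w ⟨i + 1, h⟩ ≤ code w ⟨i, Nat.lt_of_succ_lt h⟩ := by
  set I : Fin n := ⟨i, Nat.lt_of_succ_lt h⟩
  set J : Fin n := ⟨i + 1, h⟩
  have hIJ : I < J := by simp [I, J, Fin.lt_def]
  rcases lt_or_gt_of_ne (w.injective.ne (ne_of_lt hIJ)) with hw | hw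
  · -- w I < w J
    rw [code_eq, code_eq]
    apply Finset.card_le_card
    intro m hm
    obtain ⟨-, h1, h2⟩ := mem_filter.mp hm
    refine mem_filter.mpr ⟨mem_univ _, hIJ.trans h1, ?_⟩
    by_contra hcon
    push_neg at hcon
    have hne : w I ≠ w m := w.injective.ne (ne_of_lt (hIJ.trans h1))
    exact hdom ⟨I, J, m, hIJ, h1, lt_of_le_of_ne hcon hne, h2⟩
  · exact Nat.le_of_succ_le (code_succ_lt w hIJ hw)

lemma invCount_eq (w : Equiv.Perm (Fin n)) : invCount w = ∑ i : Fin n, code w i := by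
  unfold invCount
  rw [Finset.card_eq_sum_card_fiberwise (f := Prod.fst) (t := univ) (fun _ _ => mem_univ _)]
  refine Finset.sum_congr rfl fun i _ => ?_
  rw [code_eq]
  refine Finset.card_bij' (fun p _ => p.2) (fun m _ => (i, m)) ?hi ?hj ?left ?right
  case hi =>
    intro p hp
    simp only [mem_filter, mem_univ, true_and] at hp ⊢
    obtain ⟨⟨h1, h2⟩, h3⟩ := hp
    rw [← h3]
    exact ⟨h1, h2⟩
  case hj =>
    intro m hm
    simp only [mem_filter, mem_univ, true_and] at hm ⊢
    exact ⟨⟨hm.1, hm.2⟩, trivial⟩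
  case left =>
    intro p hp
    simp only [mem_filter, mem_univ, true_and] at hp
    exact Prod.ext hp.2.symm rfl
  case right =>
    intro m _
    rfl

lemma code_mul_swap (w : Equiv.Perm (Fin n)) (k : ℕ) (hk : k + 1 < n)
    (hw : w ⟨k, Nat.lt_of_succ_lt hk⟩ < w ⟨k + 1, hk⟩) (i : Fin n) :
    code (w * Equiv.swap ⟨k, Nat.lt_of_succ_lt hk⟩ ⟨k + 1, hk⟩) i =
      if i.val = k then code w ⟨k + 1, hk⟩ + 1
      else if i.val = k + 1 then code w ⟨k, Nat.lt_of_succ_lt hk⟩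
      else code w i := by
  set K : Fin n := ⟨k, Nat.lt_of_succ_lt hk⟩ with hKdef
  set K1 : Fin n := ⟨k + 1, hk⟩ with hK1def
  have hKK1 : K < K1 := by simp [Fin.lt_def, hKdef, hK1def]
  have hne : K ≠ K1 := ne_of_lt hKK1
  set σ := Equiv.swap K K1 with hσ
  have happ : ∀ m : Fin n, (w * σ) m = w (σ m) := fun m => rfl
  have hval : ∀ m : Fin n, m ≠ K → m ≠ K1 → (w * σ) m = w m := by
    intro m h1 h2; rw [happ, Equiv.swap_apply_of_ne_of_ne h1 h2]
  have hwK : (w * σ) K = w K1 := by rw [happ, Equiv.swap_apply_left]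
  have hwK1 : (w * σ) K1 = w K := by rw [happ, Equiv.swap_apply_right]
  by_cases hiK : i = K
  · subst hiK
    rw [if_pos rfl, code_eq, code_eq]
    have hset : (univ.filter fun m : Fin n => K < m ∧ (w * σ) m < (w * σ) K)
        = insert K1 (univ.filter fun m : Fin n => K1 < m ∧ w m < w K1) := by
      ext m
      simp only [mem_filter, mem_univ, true_and, mem_insert]
      constructor
      · rintro ⟨h1, h2⟩
        by_cases hm : m = K1
        · exact Or.inl hm
        · have hmK : m ≠ K := ne_of_gt h1
          have h3 : K1 < m := by
            rw [Fin.lt_def] at h1 ⊢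
            have := Fin.val_ne_of_ne hm
            simp only [hKdef, hK1def] at h1 this ⊢
            omega
          refine Or.inr ⟨h3, ?_⟩
          rwa [hval m hmK hm, hwK] at h2
      · rintro (rfl | ⟨h1, h2⟩)
        · exact ⟨hKK1, by rw [hwK1, hwK]; exact hw⟩
        · have hmK1 : m ≠ K1 := ne_of_gt h1
          have hmK : m ≠ K := ne_of_gt (hKK1.trans h1)
          exact ⟨hKK1.trans h1, by rw [hval m hmK hmK1, hwK]; exact h2⟩
    rw [hset, Finset.card_insert_of_notMem (by simp)]
  · rw [if_neg (by simpa [Fin.ext_iff, hKdef] using hiK)]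
    by_cases hiK1 : i = K1
    · subst hiK1
      rw [if_pos rfl, code_eq, code_eq]
      congr 1
      ext m
      simp only [mem_filter, mem_univ, true_and]
      constructor
      · rintro ⟨h1, h2⟩
        have hmK1 : m ≠ K1 := ne_of_gt h1
        have hmK : m ≠ K := ne_of_gt (hKK1.trans h1)
        rw [hval m hmK hmK1, hwK1] at h2
        exact ⟨hKK1.trans h1, h2⟩
      · rintro ⟨h1, h2⟩
        have hmK : m ≠ K := ne_of_gt h1
        have hmK1 : m ≠ K1 := by
          rintro rfl
          exact absurd h2 (not_lt.mpr (le_of_lt hw))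
        have h3 : K1 < m := by
          rw [Fin.lt_def] at h1 ⊢
          have := Fin.val_ne_of_ne hmK1
          simp only [hKdef, hK1def] at h1 this ⊢
          omega
        exact ⟨h3, by rw [hval m hmK hmK1, hwK1]; exact h2⟩
    · rw [if_neg (by simpa [Fin.ext_iff, hK1def] using hiK1), code_eq, code_eq]
      have hwi : (w * σ) i = w i := hval i hiK hiK1
      rcases lt_or_gt_of_ne (fun h : i.val = k => hiK (Fin.ext h)) with hik | hik
      · -- i < K : use the bijection σ
        refine Finset.card_equiv σ fun m => ?_
        simp only [mem_filter, mem_univ, true_and, hwi]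
        have hiltK : ∀ m' : Fin n, i < m' ↔ i < σ m' := by
          intro m'
          by_cases h1 : m' = K
          · subst h1
            rw [hσ, Equiv.swap_apply_left]
            constructor
            · intro _; exact lt_of_le_of_lt (le_of_lt (by exact_mod_cast (Fin.lt_def.mpr hik))) hKK1
            · intro _; exact Fin.lt_def.mpr hik
          · by_cases h2 : m' = K1
            · subst h2
              rw [hσ, Equiv.swap_apply_right]
              constructor
              · intro _; exact Fin.lt_def.mpr hik
              · intro _; exact (Fin.lt_def.mpr hik).trans hKK1
            · rw [hσ, Equiv.swap_apply_of_ne_of_ne h1 h2]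
        constructor
        · rintro ⟨h1, h2⟩
          exact ⟨(hiltK m).mp h1, by rwa [happ] at h2⟩
        · rintro ⟨h1, h2⟩
          exact ⟨(hiltK m).mpr h1, by rwa [happ]⟩
      · -- K1 < i
        congr 1
        ext m
        simp only [mem_filter, mem_univ, true_and, hwi]
        have : ∀ m : Fin n, i < m → (w * σ) m = w m := by
          intro m' him
          have h1 : m' ≠ K := by
            rintro rfl
            rw [Fin.lt_def] at him
            simp only [hKdef] at him
            omega
          have h2 : m' ≠ K1 := by
            rintro rfl
            rw [Fin.lt_def] at him
            simp only [hK1def] at him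
            omega
          exact hval m' h1 h2
        constructor
        · rintro ⟨h1, h2⟩
          exact ⟨h1, by rwa [this m h1] at h2⟩
        · rintro ⟨h1, h2⟩
          exact ⟨h1, by rwa [this m h1]⟩

lemma ddiff_eq (i j : Fin n) (hij : i ≠ j) (f g : MvPolynomial (Fin n) ℤ)
    (h : f - rename (Equiv.swap i j) f = (X i - X j) * g) : ddiff i j f = g := by
  have hne : (X i - X j : MvPolynomial (Fin n) ℤ) ≠ 0 :=
    sub_ne_zero_of_ne fun he => hij (MvPolynomial.X_injective he)
  have hex : ∃ g, f - rename (Equiv.swap i j) f = (X i - X j) * g := ⟨g, h⟩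
  rw [ddiff, dif_pos hex]
  exact mul_left_cancel₀ hne (hex.choose_spec.symm.trans h)

lemma ddiff_key (i j : Fin n) (hij : i ≠ j) (a : ℕ) (M : MvPolynomial (Fin n) ℤ)
    (hM : rename (Equiv.swap i j) M = M) :
    ddiff i j (X i ^ (a + 1) * X j ^ a * M) = X i ^ a * X j ^ a * M := by
  apply ddiff_eq i j hij
  rw [map_mul, map_mul, map_pow, map_pow, rename_X, rename_X, Equiv.swap_apply_left,
    Equiv.swap_apply_right, hM]
  ring

lemma prod_split (K K1 : Fin n) (hne : K ≠ K1) (e : Fin n → ℕ) :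
    (∏ i : Fin n, (X i : MvPolynomial (Fin n) ℤ) ^ e i)
      = X K ^ e K * X K1 ^ e K1 * ∏ i ∈ (univ.erase K).erase K1, X i ^ e i := by
  rw [← Finset.mul_prod_erase univ _ (mem_univ K),
    ← Finset.mul_prod_erase (univ.erase K) _ (Finset.mem_erase.mpr ⟨hne.symm, mem_univ K1⟩),
    mul_assoc]

lemma rename_M (K K1 : Fin n) (e : Fin n → ℕ) :
    rename (Equiv.swap K K1)
        (∏ i ∈ (univ.erase K).erase K1, (X i : MvPolynomial (Fin n) ℤ) ^ e i)
      = ∏ i ∈ (univ.erase K).erase K1, X i ^ e i := by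
  rw [map_prod]
  refine Finset.prod_congr rfl fun i hi => ?_
  simp only [mem_erase] at hi
  rw [map_pow, rename_X, Equiv.swap_apply_of_ne_of_ne hi.2.1 hi.1]

lemma ddiff_update (K : Fin n) (hK : K.val + 1 < n) (c : Fin n → ℕ)
    (hcc : c ⟨K.val + 1, hK⟩ = c K) :
    ddiff K ⟨K.val + 1, hK⟩
        (∏ i : Fin n, (X i : MvPolynomial (Fin n) ℤ) ^ (Function.update c K (c K + 1)) i)
      = ∏ i : Fin n, X i ^ c i := by
  set K1 : Fin n := ⟨K.val + 1, hK⟩ with hK1def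
  have hne : K ≠ K1 := by simp [Fin.ext_iff, hK1def]
  rw [prod_split K K1 hne, prod_split K K1 hne]
  have hMeq : (∏ i ∈ (univ.erase K).erase K1, (X i : MvPolynomial (Fin n) ℤ)
      ^ (Function.update c K (c K + 1)) i) = ∏ i ∈ (univ.erase K).erase K1, X i ^ c i := by
    refine Finset.prod_congr rfl fun i hi => ?_
    simp only [mem_erase] at hi
    rw [Function.update_of_ne hi.2.1]
  rw [hMeq, Function.update_self, Function.update_of_ne hne.symm, hcc]
  exact ddiff_key K K1 hne (c K) _ (rename_M K K1 c)

lemma eq_w0_of (w : Equiv.Perm (Fin n)) (hdec : ∀ i m : Fin n, i < m → w m < w i) :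
    w = w0 n ∧ ∀ i : Fin n, (w i).val = n - 1 - i.val := by
  have hle : ∀ i : Fin n, n - 1 - i.val ≤ (w i).val := by
    intro i
    have hcard : (Finset.Ioi i).card ≤ (Finset.Iio (w i)).card :=
      Finset.card_le_card_of_injOn w
        (fun m hm => mem_Iio.mpr (hdec i m (mem_Ioi.mp hm))) w.injective.injOn
    rwa [Fin.card_Ioi, Fin.card_Iio] at hcard
  have hsum : ∑ i : Fin n, (n - 1 - i.val) = ∑ i : Fin n, (w i).val := by
    rw [Equiv.sum_comp w (fun j : Fin n => j.val)]
    rw [← Equiv.sum_comp (Fin.revPerm : Equiv.Perm (Fin n)) (fun j : Fin n => j.val)]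
    refine Finset.sum_congr rfl fun i _ => ?_
    have : (Fin.revPerm i : Fin n).val = n - (i.val + 1) := Fin.val_rev i
    rw [this]
    omega
  have heach := (Finset.sum_eq_sum_iff_of_le (fun i _ => hle i)).mp hsum
  have hval : ∀ i : Fin n, (w i).val = n - 1 - i.val := fun i => (heach i (mem_univ i)).symm
  refine ⟨?_, hval⟩
  ext i
  show ((w i : Fin n) : ℕ) = ((i.rev : Fin n) : ℕ)
  rw [hval i, Fin.val_rev]
  omega

lemma main_ind : ∀ (μ : ℕ) (w : Equiv.Perm (Fin n)),
    (∑ i : Fin n, (n - 1 - i.val - code w i)) = μ →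
    (∀ (i : ℕ) (h : i + 1 < n),
      code w ⟨i + 1, h⟩ ≤ code w ⟨i, Nat.lt_of_succ_lt h⟩) →
    IsSchubert w (∏ i : Fin n, X i ^ code w i) := by
  intro μ
  induction μ using Nat.strong_induction_on with
  | _ μ IH =>
    intro w hμ hc
    classical
    by_cases hex : ∃ k : ℕ, ∃ h : k + 1 < n,
        code w ⟨k + 1, h⟩ = code w ⟨k, Nat.lt_of_succ_lt h⟩
    · -- recursive step
      set P : ℕ → Prop := fun k => ∃ h : k + 1 < n,
        code w ⟨k + 1, h⟩ = code w ⟨k, Nat.lt_of_succ_lt h⟩ with hPdef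
      have hfind := Nat.find_spec hex
      set k := Nat.find hex with hkdef
      obtain ⟨hkn, hck⟩ := hfind
      set K : Fin n := ⟨k, Nat.lt_of_succ_lt hkn⟩ with hKdef
      set K1 : Fin n := ⟨k + 1, hkn⟩ with hK1def
      have hKK1 : K < K1 := by simp [Fin.lt_def, hKdef, hK1def]
      have hne : K ≠ K1 := ne_of_lt hKK1
      -- w K < w K1
      have hwk : w K < w K1 := by
        rcases lt_or_gt_of_ne (w.injective.ne hne) with h | h
        · exact h
        · have := code_succ_lt w hKK1 h
          omega
      set w' := w * Equiv.swap K K1 with hw'def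
      have hcode' : ∀ i : Fin n, code w' i = Function.update (code w) K (code w K + 1) i := by
        intro i
        rw [hw'def, code_mul_swap w k hkn hwk i]
        by_cases h1 : i = K
        · subst h1
          rw [if_pos rfl, Function.update_self, hck]
        · rw [if_neg (by simpa [Fin.ext_iff, hKdef] using h1), Function.update_of_ne h1]
          by_cases h2 : i = K1
          · subst h2
            rw [if_pos rfl, hck]
          · rw [if_neg (by simpa [Fin.ext_iff, hK1def] using h2)]
      have hsum' : ∑ i : Fin n, code w' i = (∑ i : Fin n, code w i) + 1 := by
        rw [Finset.sum_congr rfl fun i _ => hcode' i,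
          Finset.sum_update_of_mem (mem_univ K),
          ← Finset.add_sum_erase univ (code w) (mem_univ K), Finset.sdiff_singleton_eq_erase]
        omega
      have hinv : invCount w' = invCount w + 1 := by
        rw [invCount_eq, invCount_eq, hsum']
      have hδK : code w K + 1 ≤ n - 1 - k := by
        have h1 := code_le w K1
        rw [hck] at h1
        simp only [hK1def] at h1
        omega
      -- measure decreases
      have hμ' : (∑ i : Fin n, (n - 1 - i.val - code w' i)) + 1 = μ := by
        rw [← hμ, ← Finset.add_sum_erase univ (fun i : Fin n => n - 1 - i.val - code w' i)
            (mem_univ K),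
          ← Finset.add_sum_erase univ (fun i : Fin n => n - 1 - i.val - code w i)
            (mem_univ K)]
        have herase : ∑ i ∈ univ.erase K, (n - 1 - i.val - code w' i)
            = ∑ i ∈ univ.erase K, (n - 1 - i.val - code w i) := by
          refine Finset.sum_congr rfl fun i hi => ?_
          rw [hcode' i, Function.update_of_ne (Finset.mem_erase.mp hi).1]
        rw [herase, hcode' K, Function.update_self]
        have : (K : Fin n).val = k := rfl
        rw [this]
        omega
      -- adjacent antitone for w'
      have hc' : ∀ (i : ℕ) (h : i + 1 < n),
          code w' ⟨i + 1, h⟩ ≤ code w' ⟨i, Nat.lt_of_succ_lt h⟩ := by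
        intro i h
        rw [hcode' ⟨i + 1, h⟩, hcode' ⟨i, Nat.lt_of_succ_lt h⟩]
        by_cases h1 : i = k
        · have e1 : (⟨i, Nat.lt_of_succ_lt h⟩ : Fin n) = K := by
            simp [Fin.ext_iff, hKdef, h1]
          have e2 : (⟨i + 1, h⟩ : Fin n) ≠ K := by
            simp [Fin.ext_iff, hKdef, h1]
          rw [e1, Function.update_self, Function.update_of_ne e2]
          have e3 : (⟨i + 1, h⟩ : Fin n) = K1 := by simp [Fin.ext_iff, hK1def, h1]
          rw [e3, hck]
          omega
        · have e1 : (⟨i, Nat.lt_of_succ_lt h⟩ : Fin n) ≠ K := by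
            simp [Fin.ext_iff, hKdef, h1]
          rw [Function.update_of_ne e1]
          by_cases h2 : i + 1 = k
          · have e2 : (⟨i + 1, h⟩ : Fin n) = K := by simp [Fin.ext_iff, hKdef, h2]
            rw [e2, Function.update_self]
            -- need code w K + 1 ≤ code w ⟨i⟩, strict from minimality
            have hPi : ¬ P i := Nat.find_min hex (by omega)
            have hne2 : code w ⟨i + 1, h⟩ ≠ code w ⟨i, Nat.lt_of_succ_lt h⟩ :=
              fun hEq => hPi ⟨h, hEq⟩
            have hle2 := hc i h
            rw [e2] at hne2 hle2
            omega
          · have e2 : (⟨i + 1, h⟩ : Fin n) ≠ K := by simp [Fin.ext_iff, hKdef, h2]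
            rw [Function.update_of_ne e2]
            exact hc i h
      -- apply IH
      have hlt : (∑ i : Fin n, (n - 1 - i.val - code w' i)) < μ := by omega
      have hS' := IH _ hlt w' rfl hc'
      have hstep := IsSchubert.step w K hkn _ hS' hinv
      have heq : ddiff K K1 (∏ i : Fin n, (X i : MvPolynomial (Fin n) ℤ) ^ code w' i)
          = ∏ i : Fin n, X i ^ code w i := by
        rw [Finset.prod_congr rfl fun i (_ : i ∈ univ) => by rw [hcode' i]]
        have := ddiff_update K hkn (code w) (by rw [← hK1def] at *; exact hck)
        exact this
      have hstep' : IsSchubert w (ddiff K K1 (∏ i : Fin n, X i ^ code w' i)) := hstep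
      rwa [heq] at hstep'
    · -- base case : w = w0
      push_neg at hex
      have hstrict : ∀ (j : ℕ) (hj : j + 1 < n),
          code w ⟨j + 1, hj⟩ < code w ⟨j, Nat.lt_of_succ_lt hj⟩ :=
        fun j hj => lt_of_le_of_ne (hc j hj) (hex j hj)
      have haux : ∀ t : ℕ, ∀ (j : ℕ) (hj : j < n), j + t = n - 1 →
          t ≤ code w ⟨j, hj⟩ := by
        intro t
        induction t with
        | zero => intro j hj _; exact Nat.zero_le _
        | succ t iht =>
          intro j hj hjt
          have hj1 : j + 1 < n := by omega
          have h1 := iht (j + 1) hj1 (by omega)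
          have h2 := hstrict j hj1
          have : (⟨j, Nat.lt_of_succ_lt hj1⟩ : Fin n) = ⟨j, hj⟩ := rfl
          rw [this] at h2
          omega
      have hge : ∀ i : Fin n, n - 1 - i.val ≤ code w i := by
        intro i
        have := haux (n - 1 - i.val) i.val i.isLt (by omega)
        simpa using this
      have hdec : ∀ i m : Fin n, i < m → w m < w i := by
        intro i m him
        have hsub : (univ.filter fun m : Fin n => i < m ∧ w m < w i) ⊆ Finset.Ioi i :=
          fun x hx => mem_Ioi.mpr (mem_filter.mp hx).2.1
        have hcard : (Finset.Ioi i).card ≤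
            (univ.filter fun m : Fin n => i < m ∧ w m < w i).card := by
          rw [Fin.card_Ioi, ← code_eq]
          exact hge i
        have hseteq := Finset.eq_of_subset_of_card_le hsub hcard
        have hm : m ∈ (univ.filter fun m : Fin n => i < m ∧ w m < w i) := by
          rw [hseteq]
          exact mem_Ioi.mpr him
        exact (mem_filter.mp hm).2.2
      obtain ⟨hw0, hval⟩ := eq_w0_of w hdec
      have hcode : ∀ i : Fin n, code w i = n - 1 - i.val :=
        fun i => le_antisymm (code_le w i) (hge i)
      rw [Finset.prod_congr rfl fun i (_ : i ∈ univ) => by rw [hcode i], hw0]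
      exact IsSchubert.base

lemma prod_rothe (w : Equiv.Perm (Fin n)) :
    (∏ p ∈ rothe n w, (X p.1 : MvPolynomial (Fin n) ℤ)) = ∏ i : Fin n, X i ^ code w i := by
  rw [← Finset.prod_fiberwise_of_maps_to (g := Prod.fst)
    (fun p (_ : p ∈ rothe n w) => mem_univ p.1) (fun p => (X p.1 : MvPolynomial (Fin n) ℤ))]
  refine Finset.prod_congr rfl fun i _ => ?_
  rw [Finset.prod_congr rfl (fun p hp => by rw [(mem_filter.mp hp).2] :
      ∀ p ∈ (rothe n w).filter (fun p => p.1 = i),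
        (X p.1 : MvPolynomial (Fin n) ℤ) = X i),
    Finset.prod_const]
  congr 1
  rw [code]
  refine Finset.card_bij' (fun p _ => p.2) (fun j _ => (i, j)) ?hi ?hj ?left ?right
  case hi =>
    rintro ⟨p1, p2⟩ hp
    obtain ⟨h1, h2⟩ := mem_filter.mp hp
    have h2' : p1 = i := h2
    subst h2'
    exact mem_filter.mpr ⟨mem_univ _, h1⟩
  case hj =>
    intro j hj
    exact mem_filter.mpr ⟨(mem_filter.mp hj).2, rfl⟩
  case left =>
    rintro ⟨p1, p2⟩ hp
    have h2' : p1 = i := (mem_filter.mp hp).2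
    subst h2'
    rfl
  case right =>
    intro j _
    rfl

end Lemmas

/-- If `w` is dominant (132-avoiding), then its Schubert polynomial equals
`∏_{(i,j) ∈ D(w)} x_i = ∏_i x_i^{c_i(w)}`. -/
theorem schubert_dominant (n : ℕ) (w : Equiv.Perm (Fin n))
    (hdom : ¬ ∃ i j k : Fin n, i < j ∧ j < k ∧ w i < w k ∧ w k < w j) :
    IsSchubert w (∏ p ∈ rothe n w, X p.1) ∧
      (∏ p ∈ rothe n w, X p.1 : MvPolynomial (Fin n) ℤ) =
        ∏ i : Fin n, X i ^ code w i := by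
  have h2 := prod_rothe w
  refine ⟨?_, h2⟩
  rw [h2]
  exact main_ind _ w rfl (code_adj w hdom)
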